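/- Let G be a countable discrete amenable group acting continuously on a compact metric space (𝒳,d). If (𝒳,d) has tame growth of covering numbers, then the upper metric mean dimension satisfies: limsup_{ε→0} S(𝒳,G,d,ε)/|log ε| = limsup_{ε→0} S̃(𝒳,G,d,ε)/|log ε|, and the same holds with liminf. -/

import Mathlib

open MeasureTheory Filter

/-- The minimal cardinality `#(𝒳,ρ,ε)` of an open cover of `𝒳` all of whose members
have `ρ`-diameter `< ε`. -/
noncomputable def covNum (𝒳 : Type*) [TopologicalSpace 𝒳] (ρ : 𝒳 → 𝒳 → ℝ) (ε : ℝ) : ℕ :=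
  sInf {n : ℕ | ∃ U : Finset (Set 𝒳), U.card = n ∧ (∀ V ∈ U, IsOpen V) ∧
    (⋃ V ∈ U, V) = Set.univ ∧ ∀ V ∈ U, ∀ x ∈ V, ∀ y ∈ V, ρ x y < ε}

/-- The max (sup) metric `d_F(x,y) = max_{g∈F} d(gx,gy)`. -/
noncomputable def dMax {G 𝒳 : Type*} [SMul G 𝒳] [MetricSpace 𝒳] (F : Finset G)
    (x y : 𝒳) : ℝ :=
  ⨆ g ∈ F, dist (g • x) (g • y)

/-- The averaged metric `d̄_F(x,y) = (1/|F|) ∑_{g∈F} d(gx,gy)`. -/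
noncomputable def dBar {G 𝒳 : Type*} [SMul G 𝒳] [MetricSpace 𝒳] (F : Finset G)
    (x y : 𝒳) : ℝ :=
  ((F.card : ℝ))⁻¹ * ∑ g ∈ F, dist (g • x) (g • y)

/-- `F` is a (left) Følner sequence of nonempty finite subsets of `G`. -/
def IsFolner {G : Type*} [Group G] [DecidableEq G] (F : ℕ → Finset G) : Prop :=
  (∀ n, (F n).Nonempty) ∧
  ∀ g : G, Filter.Tendsto
    (fun n => ((symmDiff ((F n).image (fun h => g * h)) (F n)).card : ℝ) / ((F n).card : ℝ))
    Filter.atTop (nhds 0)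

/-- `(𝒳,d)` has tame growth of covering numbers:
`ε^δ log #(𝒳,d,ε) → 0` as `ε → 0⁺`, for every `δ > 0`. -/
def TameGrowth (𝒳 : Type*) [MetricSpace 𝒳] : Prop :=
  ∀ δ > (0 : ℝ), Filter.Tendsto (fun ε : ℝ => ε ^ δ * Real.log (covNum 𝒳 dist ε))
    (nhdsWithin 0 (Set.Ioi 0)) (nhds 0)

set_option linter.unusedSectionVars false
set_option maxHeartbeats 1000000

section Helpers

variable {G 𝒳 : Type*} [Group G] [MulAction G 𝒳] [MetricSpace 𝒳]

variable [DecidableEq G]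

lemma inner_iSup_eq (F : Finset G) (c : ℝ) (g : G) :
    (⨆ _ : g ∈ F, c) = if g ∈ F then c else 0 := by
  by_cases h : g ∈ F
  · haveI : Nonempty (g ∈ F) := ⟨h⟩
    rw [ciSup_const, if_pos h]
  · haveI : IsEmpty (g ∈ F) := ⟨fun hh => h hh⟩
    rw [Real.iSup_of_isEmpty, if_neg h]

lemma le_dMax (F : Finset G) (x y : 𝒳) {g : G} (hg : g ∈ F) :
    dist (g • x) (g • y) ≤ dMax F x y := by
  classical
  have hbdd : BddAbove (Set.range fun g' : G => ⨆ _ : g' ∈ F, dist (g' • x) (g' • y)) := by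
    apply BddAbove.mono ?_
      ((insert (0:ℝ) (F.image (fun g' => dist (g' • x) (g' • y))))).bddAbove
    rintro _ ⟨g', rfl⟩
    simp only
    rw [inner_iSup_eq F (dist (g' • x) (g' • y)) g']
    split_ifs with h
    · simp only [Finset.coe_insert, Set.mem_insert_iff, Finset.mem_coe, Finset.mem_image]
      exact Or.inr ⟨g', h, rfl⟩
    · simp
  calc dist (g • x) (g • y) = ⨆ _ : g ∈ F, dist (g • x) (g • y) := by
        rw [inner_iSup_eq F (dist (g • x) (g • y)) g, if_pos hg]
    _ ≤ dMax F x y := le_ciSup hbdd g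

lemma dMax_le (F : Finset G) (x y : 𝒳) {c : ℝ} (hc : 0 ≤ c)
    (h : ∀ g ∈ F, dist (g • x) (g • y) ≤ c) : dMax F x y ≤ c :=
  Real.iSup_le (fun g => Real.iSup_le (fun hg => h g hg) hc) hc

lemma dMax_nonneg {F : Finset G} (hne : F.Nonempty) (x y : 𝒳) : 0 ≤ dMax F x y := by
  obtain ⟨g, hg⟩ := hne
  exact dist_nonneg.trans (le_dMax F x y hg)

lemma dMax_sup' {F : Finset G} (hne : F.Nonempty) (x y : 𝒳) :
    dMax F x y = F.sup' hne fun g => dist (g • x) (g • y) := by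
  refine le_antisymm (dMax_le F x y ?_ fun g hg => Finset.le_sup' (f := fun g => dist (g • x) (g • y)) hg)
    (Finset.sup'_le _ _ fun g hg => le_dMax F x y hg)
  exact dist_nonneg.trans (Finset.le_sup' (f := fun g => dist (g • x) (g • y)) hne.choose_spec)

lemma continuous_finset_sup' {ι α : Type*} [TopologicalSpace α] (s : Finset ι) (hne : s.Nonempty)
    (f : ι → α → ℝ) (hf : ∀ i, Continuous (f i)) :
    Continuous fun y => s.sup' hne fun i => f i y := by
  induction hne using Finset.Nonempty.cons_induction with
  | singleton i => simpa using hf i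
  | cons i s hi hs ih =>
      rw [show (fun y => (Finset.cons i s hi).sup' (Finset.cons_nonempty hi) fun j => f j y)
        = fun y => max (f i y) (s.sup' hs fun j => f j y) from funext fun y => Finset.sup'_cons hs _]
      exact (hf i).max ih

lemma continuous_dMax (hcontG : ∀ g : G, Continuous fun x : 𝒳 => g • x)
    {F : Finset G} (hne : F.Nonempty) (x : 𝒳) : Continuous fun y => dMax F x y := by
  have : (fun y => dMax F x y) = fun y => F.sup' hne fun g => dist (g • x) (g • y) :=
    funext fun y => dMax_sup' hne x y
  rw [this]
  exact continuous_finset_sup' F hne _ fun g => continuous_const.dist (hcontG g)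

lemma dMax_comm (F : Finset G) (x y : 𝒳) : dMax F x y = dMax F y x := by
  unfold dMax; simp only [dist_comm]

lemma dMax_self {F : Finset G} (hne : F.Nonempty) (x : 𝒳) : dMax F x x = 0 :=
  le_antisymm (dMax_le F x x le_rfl fun g _ => by simp) (dMax_nonneg hne x x)

lemma dMax_triangle {F : Finset G} (hne : F.Nonempty) (x y z : 𝒳) :
    dMax F x z ≤ dMax F x y + dMax F y z :=
  dMax_le F x z (add_nonneg (dMax_nonneg hne x y) (dMax_nonneg hne y z)) fun g hg =>
    (dist_triangle _ (g • y) _).trans (add_le_add (le_dMax F x y hg) (le_dMax F y z hg))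

lemma dBar_nonneg (F : Finset G) (x y : 𝒳) : 0 ≤ dBar F x y :=
  mul_nonneg (inv_nonneg.2 (Nat.cast_nonneg _)) (Finset.sum_nonneg fun _ _ => dist_nonneg)

lemma dBar_comm (F : Finset G) (x y : 𝒳) : dBar F x y = dBar F y x := by
  unfold dBar; simp only [dist_comm]

lemma dBar_self (F : Finset G) (x : 𝒳) : dBar F x x = 0 := by
  simp [dBar]

lemma dBar_triangle (F : Finset G) (x y z : 𝒳) :
    dBar F x z ≤ dBar F x y + dBar F y z := by
  unfold dBar
  rw [← mul_add, ← Finset.sum_add_distrib]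
  exact mul_le_mul_of_nonneg_left
    (Finset.sum_le_sum fun g _ => dist_triangle _ (g • y) _)
    (inv_nonneg.2 (Nat.cast_nonneg _))

lemma continuous_dBar (hcontG : ∀ g : G, Continuous fun x : 𝒳 => g • x)
    (F : Finset G) (x : 𝒳) : Continuous fun y => dBar F x y :=
  continuous_const.mul (continuous_finset_sum _ fun g _ => continuous_const.dist (hcontG g))

lemma dBar_le_dMax {F : Finset G} (hne : F.Nonempty) (x y : 𝒳) :
    dBar F x y ≤ dMax F x y := by
  have hc : (0:ℝ) < F.card := by exact_mod_cast hne.card_pos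
  rw [dBar, inv_mul_le_iff₀ hc]
  calc ∑ g ∈ F, dist (g • x) (g • y) ≤ ∑ _g ∈ F, dMax F x y :=
        Finset.sum_le_sum fun g hg => le_dMax F x y hg
    _ = F.card * dMax F x y := by rw [Finset.sum_const, nsmul_eq_mul]

lemma covNum_le_card {ρ : 𝒳 → 𝒳 → ℝ} {ε : ℝ} (U : Finset (Set 𝒳))
    (hopen : ∀ V ∈ U, IsOpen V) (hcover : (⋃ V ∈ U, V) = Set.univ)
    (hdiam : ∀ V ∈ U, ∀ x ∈ V, ∀ y ∈ V, ρ x y < ε) :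
    covNum 𝒳 ρ ε ≤ U.card :=
  Nat.sInf_le ⟨U, rfl, hopen, hcover, hdiam⟩

lemma exists_good_cover [CompactSpace 𝒳] (ρ : 𝒳 → 𝒳 → ℝ) (hcont : ∀ x, Continuous (ρ x))
    (hrefl : ∀ x, ρ x x = 0) (hsymm : ∀ x y, ρ x y = ρ y x)
    (htri : ∀ x y z, ρ x z ≤ ρ x y + ρ y z) {ε : ℝ} (hε : 0 < ε) :
    ∃ U : Finset (Set 𝒳), U.card = covNum 𝒳 ρ ε ∧ (∀ V ∈ U, IsOpen V) ∧
      (⋃ V ∈ U, V) = Set.univ ∧ ∀ V ∈ U, ∀ x ∈ V, ∀ y ∈ V, ρ x y < ε := by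
  classical
  have hne : {n : ℕ | ∃ U : Finset (Set 𝒳), U.card = n ∧ (∀ V ∈ U, IsOpen V) ∧
      (⋃ V ∈ U, V) = Set.univ ∧ ∀ V ∈ U, ∀ x ∈ V, ∀ y ∈ V, ρ x y < ε}.Nonempty := by
    obtain ⟨t, ht⟩ := IsCompact.elim_finite_subcover isCompact_univ
      (fun x : 𝒳 => (ρ x) ⁻¹' Set.Iio (ε/2))
      (fun x => (isOpen_Iio).preimage (hcont x))
      (fun x _ => Set.mem_iUnion.2 ⟨x, by simp [hrefl x, half_pos hε]⟩)
    refine ⟨(t.image fun x => (ρ x) ⁻¹' Set.Iio (ε/2)).card,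
      t.image fun x => (ρ x) ⁻¹' Set.Iio (ε/2), rfl, ?_, ?_, ?_⟩
    · intro V hV
      obtain ⟨x, _, rfl⟩ := Finset.mem_image.1 hV
      exact isOpen_Iio.preimage (hcont x)
    · apply Set.eq_univ_of_univ_subset
      intro z hz
      have := ht hz
      simp only [Set.mem_iUnion, exists_prop] at this
      obtain ⟨x, hx, hzx⟩ := this
      exact Set.mem_biUnion (Finset.mem_image.2 ⟨x, hx, rfl⟩) hzx
    · intro V hV a ha b hb
      obtain ⟨x, _, rfl⟩ := Finset.mem_image.1 hV
      have h1 : ρ x a < ε/2 := ha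
      have h2 : ρ x b < ε/2 := hb
      calc ρ a b ≤ ρ a x + ρ x b := htri a x b
        _ = ρ x a + ρ x b := by rw [hsymm a x]
        _ < ε/2 + ε/2 := by linarith
        _ = ε := by ring
  exact Nat.sInf_mem hne

lemma one_le_covNum [CompactSpace 𝒳] [Nonempty 𝒳] (ρ : 𝒳 → 𝒳 → ℝ)
    (hcont : ∀ x, Continuous (ρ x)) (hrefl : ∀ x, ρ x x = 0) (hsymm : ∀ x y, ρ x y = ρ y x)
    (htri : ∀ x y z, ρ x z ≤ ρ x y + ρ y z) {ε : ℝ} (hε : 0 < ε) :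
    1 ≤ covNum 𝒳 ρ ε := by
  obtain ⟨U, hcard, _, hcover, _⟩ := exists_good_cover ρ hcont hrefl hsymm htri hε
  rcases Nat.eq_zero_or_pos (covNum 𝒳 ρ ε) with h | h
  · exfalso
    have : U = ∅ := Finset.card_eq_zero.mp (hcard.trans h)
    subst this
    simp only [Finset.notMem_empty, Set.iUnion_of_empty, Set.iUnion_empty] at hcover
    exact (Set.empty_ne_univ) hcover
  · exact h

lemma covNum_mono_rho [CompactSpace 𝒳] {ρ ρ' : 𝒳 → 𝒳 → ℝ} (hle : ∀ x y, ρ x y ≤ ρ' x y)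
    (hcont : ∀ x, Continuous (ρ' x)) (hrefl : ∀ x, ρ' x x = 0) (hsymm : ∀ x y, ρ' x y = ρ' y x)
    (htri : ∀ x y z, ρ' x z ≤ ρ' x y + ρ' y z) {ε : ℝ} (hε : 0 < ε) :
    covNum 𝒳 ρ ε ≤ covNum 𝒳 ρ' ε := by
  obtain ⟨U, hcard, hopen, hcover, hdiam⟩ := exists_good_cover ρ' hcont hrefl hsymm htri hε
  rw [← hcard]
  exact covNum_le_card U hopen hcover fun V hV x hx y hy =>
    lt_of_le_of_lt (hle x y) (hdiam V hV x hx y hy)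

lemma log_nat_nonneg (n : ℕ) : 0 ≤ Real.log n := Real.log_natCast_nonneg n

lemma log_nat_mono {a b : ℕ} (h : a ≤ b) : Real.log a ≤ Real.log b := by
  rcases Nat.eq_zero_or_pos a with rfl | ha
  · simpa using log_nat_nonneg b
  · exact Real.log_le_log (by exact_mod_cast ha) (by exact_mod_cast h)

end Helpers
section Part2

variable {G 𝒳 : Type*} [Group G] [DecidableEq G] [MulAction G 𝒳] [MetricSpace 𝒳]

lemma card_filter_le (F : Finset G) {lam : ℝ} (h0 : 0 < lam)
    (h2 : lam ≤ 1/2) {m : ℕ} (hm : m ≤ F.card) :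
    ((F.powerset.filter (fun B => B.card ≤ m)).card : ℝ) ≤
      lam⁻¹ ^ m * (1 - lam)⁻¹ ^ (F.card - m) := by
  classical
  set n := F.card with hn
  have h1lam : 0 < 1 - lam := by linarith
  have hsum : (∑ B ∈ F.powerset, lam ^ B.card * (1 - lam) ^ (n - B.card)) = 1 := by
    calc ∑ B ∈ F.powerset, lam ^ B.card * (1 - lam) ^ (n - B.card)
        = ∑ B ∈ F.powerset, (∏ _i ∈ B, lam) * ∏ _i ∈ F \ B, (1 - lam) := by
          refine Finset.sum_congr rfl fun B hB => ?_
          rw [Finset.prod_const, Finset.prod_const,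
            Finset.card_sdiff_of_subset (Finset.mem_powerset.1 hB)]
      _ = ∏ _i ∈ F, (lam + (1 - lam)) := (Finset.prod_add _ _ F).symm
      _ = 1 := by simp
  have hterm : ∀ B ∈ F.powerset.filter (fun B => B.card ≤ m),
      lam ^ m * (1 - lam) ^ (n - m) ≤ lam ^ B.card * (1 - lam) ^ (n - B.card) := by
    intro B hB
    have hBF := (Finset.mem_filter.1 hB).1
    have hjm : B.card ≤ m := (Finset.mem_filter.1 hB).2
    have hjn : B.card ≤ n := Finset.card_le_card (Finset.mem_powerset.1 hBF)
    set j := B.card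
    have hEq1 : lam ^ m = lam ^ j * lam ^ (m - j) := by rw [← pow_add]; congr 1; omega
    have hEq2 : (1 - lam) ^ (n - j) = (1 - lam) ^ (m - j) * (1 - lam) ^ (n - m) := by
      rw [← pow_add]; congr 1; omega
    rw [hEq1, hEq2]
    have hle : lam ^ (m - j) ≤ (1 - lam) ^ (m - j) :=
      pow_le_pow_left₀ (le_of_lt h0) (by linarith) _
    calc lam ^ j * lam ^ (m - j) * (1 - lam) ^ (n - m)
        ≤ lam ^ j * (1 - lam) ^ (m - j) * (1 - lam) ^ (n - m) := by
          exact mul_le_mul_of_nonneg_right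
            (mul_le_mul_of_nonneg_left hle (pow_nonneg h0.le j)) (pow_nonneg h1lam.le _)
      _ = lam ^ j * ((1 - lam) ^ (m - j) * (1 - lam) ^ (n - m)) := by ring
  have hfin : ((F.powerset.filter (fun B => B.card ≤ m)).card : ℝ) *
      (lam ^ m * (1 - lam) ^ (n - m)) ≤ 1 := by
    calc ((F.powerset.filter (fun B => B.card ≤ m)).card : ℝ) *
        (lam ^ m * (1 - lam) ^ (n - m))
        = ∑ _B ∈ F.powerset.filter (fun B => B.card ≤ m),
            lam ^ m * (1 - lam) ^ (n - m) := by rw [Finset.sum_const, nsmul_eq_mul]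
      _ ≤ ∑ B ∈ F.powerset.filter (fun B => B.card ≤ m),
            lam ^ B.card * (1 - lam) ^ (n - B.card) := Finset.sum_le_sum hterm
      _ ≤ ∑ B ∈ F.powerset, lam ^ B.card * (1 - lam) ^ (n - B.card) :=
          Finset.sum_le_sum_of_subset_of_nonneg (Finset.filter_subset _ _)
            (fun B _ _ => by positivity)
      _ = 1 := hsum
  have hpos : 0 < lam ^ m * (1 - lam) ^ (n - m) := by positivity
  have h1 : ((F.powerset.filter (fun B => B.card ≤ m)).card : ℝ) ≤
      1 / (lam ^ m * (1 - lam) ^ (n - m)) := (le_div_iff₀ hpos).2 hfin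
  calc ((F.powerset.filter (fun B => B.card ≤ m)).card : ℝ)
      ≤ 1 / (lam ^ m * (1 - lam) ^ (n - m)) := h1
    _ = lam⁻¹ ^ m * (1 - lam)⁻¹ ^ (n - m) := by
        rw [inv_pow, inv_pow, one_div, mul_inv]

lemma cov_dMax_le [CompactSpace 𝒳] [Nonempty 𝒳]
    (hcontG : ∀ g : G, Continuous fun x : 𝒳 => g • x)
    (F : Finset G) (hne : F.Nonempty) {ε lam : ℝ} (hε : 0 < ε) (hlam : 0 < lam) :
    covNum 𝒳 (dMax F) (3 * ε) ≤
      covNum 𝒳 (dBar F) (lam * ε) *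
        ((F.powerset.filter (fun B => B.card ≤ Nat.floor (lam * F.card))).card *
          (covNum 𝒳 dist ε) ^ Nat.floor (lam * F.card)) := by
  classical
  set n := F.card with hn
  set m := Nat.floor (lam * n) with hmdef
  set k := covNum 𝒳 dist ε with hkdef
  have hdistcont : ∀ x : 𝒳, Continuous (dist x) := fun x => continuous_const.dist continuous_id
  have hk1 : 1 ≤ k := one_le_covNum dist hdistcont dist_self dist_comm dist_triangle hε
  obtain ⟨𝒰, h𝒰card, h𝒰open, h𝒰cover, h𝒰diam⟩ :=
    exists_good_cover (dBar F) (fun x => continuous_dBar hcontG F x) (dBar_self F)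
      (dBar_comm F) (dBar_triangle F) (mul_pos hlam hε)
  obtain ⟨𝒞, h𝒞card, h𝒞open, h𝒞cover, h𝒞diam⟩ :=
    exists_good_cover dist hdistcont dist_self dist_comm dist_triangle hε
  let pt : Set 𝒳 → 𝒳 := fun V => if h : V.Nonempty then h.choose else Classical.arbitrary 𝒳
  have hpt : ∀ V : Set 𝒳, V.Nonempty → pt V ∈ V := by
    intro V hV
    simp only [pt, dif_pos hV]
    exact hV.choose_spec
  set T : Finset (Finset G) := F.powerset.filter (fun B => B.card ≤ m) with hT
  let toFun : ((B : Finset G) × (∀ g ∈ B, Set 𝒳)) → G → Set 𝒳 :=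
    fun p g => if h : g ∈ p.1 then p.2 g h else Set.univ
  let W : Set 𝒳 → Finset G → (G → Set 𝒳) → Set 𝒳 := fun V B φ =>
    (V ∩ ⋂ g ∈ F \ B, (fun y => g • y) ⁻¹' Metric.ball (g • pt V) ε) ∩
      ⋂ g ∈ B, (fun y => g • y) ⁻¹' φ g
  let I : Finset (Set 𝒳 × ((B : Finset G) × (∀ g ∈ B, Set 𝒳))) :=
    𝒰 ×ˢ (T.sigma fun B => B.pi fun _ => 𝒞)
  let U : Finset (Set 𝒳) := I.image fun q => W q.1 q.2.1 (toFun q.2)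
  have hUle : covNum 𝒳 (dMax F) (3 * ε) ≤ U.card := by
    apply covNum_le_card
    · intro V hV
      obtain ⟨q, hq, rfl⟩ := Finset.mem_image.1 hV
      obtain ⟨hq1, hq2⟩ := Finset.mem_product.1 hq
      obtain ⟨hqT, hqpi⟩ := Finset.mem_sigma.1 hq2
      apply IsOpen.inter
      · apply IsOpen.inter (h𝒰open _ hq1)
        apply isOpen_biInter_finset
        intro g _
        exact (Metric.isOpen_ball).preimage (hcontG g)
      · apply isOpen_biInter_finset
        intro g hg
        have hEq : toFun q.2 g = q.2.2 g hg := dif_pos hg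
        rw [hEq]
        exact (h𝒞open _ (Finset.mem_pi.1 hqpi g hg)).preimage (hcontG g)
    · apply Set.eq_univ_of_univ_subset
      intro y _
      have hy : ∃ V ∈ 𝒰, y ∈ V := by
        have h0 : y ∈ ⋃ V ∈ 𝒰, V := h𝒰cover.symm ▸ Set.mem_univ y
        simpa using h0
      obtain ⟨V, hV𝒰, hyV⟩ := hy
      have hVne : V.Nonempty := ⟨y, hyV⟩
      have hx₀V : pt V ∈ V := hpt V hVne
      have hdxy : dBar F (pt V) y < lam * ε := h𝒰diam V hV𝒰 (pt V) hx₀V y hyV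
      set B : Finset G := F.filter (fun g => ε ≤ dist (g • pt V) (g • y)) with hB
      have hBF : B ⊆ F := Finset.filter_subset _ _
      have hnpos : (0:ℝ) < n := by exact_mod_cast hne.card_pos
      have hsum : ∑ g ∈ F, dist (g • pt V) (g • y) < n * (lam * ε) := by
        have h1 : (n:ℝ)⁻¹ * ∑ g ∈ F, dist (g • pt V) (g • y) < lam * ε := hdxy
        exact (inv_mul_lt_iff₀ hnpos).1 h1
      have hcard : (B.card : ℝ) * ε ≤ ∑ g ∈ F, dist (g • pt V) (g • y) := by
        calc (B.card : ℝ) * ε = ∑ _g ∈ B, ε := by rw [Finset.sum_const, nsmul_eq_mul]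
          _ ≤ ∑ g ∈ B, dist (g • pt V) (g • y) :=
              Finset.sum_le_sum fun g hg => (Finset.mem_filter.1 hg).2
          _ ≤ ∑ g ∈ F, dist (g • pt V) (g • y) :=
              Finset.sum_le_sum_of_subset_of_nonneg hBF fun _ _ _ => dist_nonneg
      have hBm : B.card ≤ m := by
        apply Nat.le_floor
        have hlt : (B.card : ℝ) * ε < lam * n * ε := by
          calc (B.card : ℝ) * ε ≤ ∑ g ∈ F, dist (g • pt V) (g • y) := hcard
            _ < n * (lam * ε) := hsum
            _ = lam * n * ε := by ring
        exact le_of_lt (lt_of_mul_lt_mul_right hlt hε.le)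
      have hφ : ∀ g : G, ∃ C ∈ 𝒞, g • y ∈ C := by
        intro g
        have h0 : g • y ∈ ⋃ C ∈ 𝒞, C := h𝒞cover.symm ▸ Set.mem_univ _
        simpa using h0
      have hq : (V, ⟨B, fun g _ => (hφ g).choose⟩) ∈ I := by
        apply Finset.mem_product.2
        refine ⟨hV𝒰, Finset.mem_sigma.2 ⟨?_, ?_⟩⟩
        · exact Finset.mem_filter.2 ⟨Finset.mem_powerset.2 hBF, hBm⟩
        · exact Finset.mem_pi.2 fun g hg => (hφ g).choose_spec.1
      apply Set.mem_biUnion (Finset.mem_image.2 ⟨(V, ⟨B, fun g _ => (hφ g).choose⟩), hq, rfl⟩)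
      refine ⟨⟨hyV, ?_⟩, ?_⟩
      · apply Set.mem_iInter₂.2
        intro g hg
        have hgF : g ∈ F := (Finset.mem_sdiff.1 hg).1
        have hgB : g ∉ B := (Finset.mem_sdiff.1 hg).2
        have hlt : ¬ ε ≤ dist (g • pt V) (g • y) := fun hc => hgB (Finset.mem_filter.2 ⟨hgF, hc⟩)
        simp only [Set.mem_preimage, Metric.mem_ball]
        rw [dist_comm]
        exact lt_of_not_ge hlt
      · apply Set.mem_iInter₂.2
        intro g hg
        have hEq : toFun ⟨B, fun g _ => (hφ g).choose⟩ g = (hφ g).choose := dif_pos hg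
        simp only [Set.mem_preimage, hEq]
        exact (hφ g).choose_spec.2
    · intro Vq hVq a ha b hb
      obtain ⟨q, hq, rfl⟩ := Finset.mem_image.1 hVq
      obtain ⟨hq1, hq2⟩ := Finset.mem_product.1 hq
      obtain ⟨hqT, hqpi⟩ := Finset.mem_sigma.1 hq2
      have hBF : q.2.1 ⊆ F := Finset.mem_powerset.1 (Finset.mem_filter.1 hqT).1
      have h2ε : dMax F a b ≤ 2 * ε := by
        apply dMax_le F a b (by linarith)
        intro g hg
        by_cases hgB : g ∈ q.2.1
        · have hC : q.2.2 g hgB ∈ 𝒞 := Finset.mem_pi.1 hqpi g hgB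
          have hEq : toFun q.2 g = q.2.2 g hgB := dif_pos hgB
          have haC : g • a ∈ q.2.2 g hgB := by
            have h0 := Set.mem_iInter₂.1 ha.2 g hgB
            rwa [Set.mem_preimage, hEq] at h0
          have hbC : g • b ∈ q.2.2 g hgB := by
            have h0 := Set.mem_iInter₂.1 hb.2 g hgB
            rwa [Set.mem_preimage, hEq] at h0
          have := h𝒞diam _ hC _ haC _ hbC
          linarith
        · have hgFB : g ∈ F \ q.2.1 := Finset.mem_sdiff.2 ⟨hg, hgB⟩
          have h1 := Set.mem_iInter₂.1 ha.1.2 g hgFB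
          have h2 := Set.mem_iInter₂.1 hb.1.2 g hgFB
          simp only [Set.mem_preimage, Metric.mem_ball] at h1 h2
          have hfin : dist (g • a) (g • b) < 2 * ε := by
            calc dist (g • a) (g • b)
                ≤ dist (g • a) (g • pt q.1) + dist (g • pt q.1) (g • b) := dist_triangle _ _ _
              _ < ε + ε := by
                  rw [dist_comm (g • pt q.1) (g • b)]
                  exact add_lt_add h1 h2
              _ = 2 * ε := by ring
          exact le_of_lt hfin
      linarith
  have hIcard : U.card ≤ covNum 𝒳 (dBar F) (lam * ε) * (T.card * k ^ m) := by
    calc U.card ≤ I.card := Finset.card_image_le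
      _ = 𝒰.card * (T.sigma fun B => B.pi fun _ => 𝒞).card := Finset.card_product _ _
      _ ≤ 𝒰.card * (T.card * k ^ m) := by
          apply Nat.mul_le_mul le_rfl
          rw [Finset.card_sigma]
          calc ∑ B ∈ T, (B.pi fun _ => 𝒞).card = ∑ B ∈ T, k ^ B.card := by
                refine Finset.sum_congr rfl fun B _ => ?_
                rw [Finset.card_pi, Finset.prod_const, h𝒞card]
            _ ≤ ∑ _B ∈ T, k ^ m := Finset.sum_le_sum fun B hB =>
                Nat.pow_le_pow_right hk1 (Finset.mem_filter.1 hB).2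
            _ = T.card * k ^ m := by rw [Finset.sum_const, smul_eq_mul]
      _ = covNum 𝒳 (dBar F) (lam * ε) * (T.card * k ^ m) := by rw [h𝒰card]
  exact hUle.trans hIcard

end Part2
section Part3

variable {G 𝒳 : Type*} [Group G] [DecidableEq G] [MulAction G 𝒳] [MetricSpace 𝒳]

lemma per_n [CompactSpace 𝒳] [Nonempty 𝒳]
    (hcontG : ∀ g : G, Continuous fun x : 𝒳 => g • x)
    (F : Finset G) (hne : F.Nonempty) {ε lam : ℝ} (hε : 0 < ε) (h0 : 0 < lam)
    (h2 : lam ≤ 1/2) :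
    Real.log (covNum 𝒳 (dMax F) (3 * ε)) / (F.card : ℝ) ≤
      Real.log (covNum 𝒳 (dBar F) (lam * ε)) / (F.card : ℝ) +
        (lam * Real.log lam⁻¹ + Real.log (1 - lam)⁻¹ +
          lam * Real.log (covNum 𝒳 dist ε)) := by
  classical
  set n := F.card with hn
  set m := Nat.floor (lam * n) with hmdef
  set k := covNum 𝒳 dist ε with hkdef
  set N := covNum 𝒳 (dBar F) (lam * ε) with hNdef
  set Tc := (F.powerset.filter (fun B => B.card ≤ m)).card with hTcdef
  have hnpos : (0:ℝ) < n := by exact_mod_cast hne.card_pos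
  have h1lam : (0:ℝ) < 1 - lam := by linarith
  have hdistcont : ∀ x : 𝒳, Continuous (dist x) := fun x => continuous_const.dist continuous_id
  have hk1 : 1 ≤ k := one_le_covNum dist hdistcont dist_self dist_comm dist_triangle hε
  have hN1 : 1 ≤ N :=
    one_le_covNum (dBar F) (fun x => continuous_dBar hcontG F x) (dBar_self F) (dBar_comm F)
      (dBar_triangle F) (mul_pos h0 hε)
  have hT1 : 1 ≤ Tc := by
    rw [hTcdef]
    apply Finset.card_pos.2
    exact ⟨∅, Finset.mem_filter.2 ⟨Finset.empty_mem_powerset F, by simp⟩⟩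
  have h_m : (m:ℝ) ≤ lam * n := Nat.floor_le (by positivity)
  have hmn : m ≤ n := by
    have : (m:ℝ) ≤ (n:ℝ) := h_m.trans (by nlinarith)
    exact_mod_cast this
  have h_nm : ((n - m : ℕ) : ℝ) ≤ (n : ℝ) := by
    have : (n - m : ℕ) ≤ n := Nat.sub_le n m
    exact_mod_cast this
  have hlog_lam : 0 ≤ Real.log lam⁻¹ := by
    apply Real.log_nonneg
    rw [show lam⁻¹ = 1 / lam from (one_div lam).symm]
    exact (le_div_iff₀ h0).2 (by linarith)
  have hlog_1lam : 0 ≤ Real.log (1 - lam)⁻¹ := by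
    apply Real.log_nonneg
    rw [show (1 - lam)⁻¹ = 1 / (1 - lam) from (one_div _).symm]
    exact (le_div_iff₀ h1lam).2 (by linarith)
  have hlogk : 0 ≤ Real.log (k : ℝ) := log_nat_nonneg k
  have hc := cov_dMax_le hcontG F hne hε h0
  rw [← hn, ← hmdef, ← hkdef, ← hNdef, ← hTcdef] at hc
  have hN0 : ((N:ℕ):ℝ) ≠ 0 := by positivity
  have hT0 : ((Tc:ℕ):ℝ) ≠ 0 := by
    have : (0:ℝ) < Tc := by exact_mod_cast hT1
    exact ne_of_gt this
  have hk0 : ((k:ℕ):ℝ) ≠ 0 := by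
    have : (0:ℝ) < k := by exact_mod_cast hk1
    exact ne_of_gt this
  have h_log1 : Real.log (covNum 𝒳 (dMax F) (3*ε)) ≤
      Real.log N + (Real.log Tc + (m : ℝ) * Real.log k) := by
    have h := log_nat_mono hc
    rw [show ((N * (Tc * k ^ m) : ℕ) : ℝ) = (N:ℝ) * ((Tc:ℝ) * (k:ℝ)^m) by push_cast; ring] at h
    rwa [Real.log_mul hN0 (by positivity), Real.log_mul hT0 (by positivity),
      Real.log_pow] at h
  have h_log2 : Real.log Tc ≤ (m:ℝ) * Real.log lam⁻¹ + ((n - m : ℕ):ℝ) * Real.log (1-lam)⁻¹ := by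
    have hcf := card_filter_le F h0 h2 hmn
    have hTpos : (0:ℝ) < (Tc:ℝ) := by exact_mod_cast hT1
    have h := Real.log_le_log hTpos hcf
    rwa [Real.log_mul (by positivity) (by positivity), Real.log_pow, Real.log_pow] at h
  have p1 : (m:ℝ) * Real.log lam⁻¹ ≤ lam * n * Real.log lam⁻¹ :=
    mul_le_mul_of_nonneg_right h_m hlog_lam
  have p2 : ((n - m:ℕ):ℝ) * Real.log (1-lam)⁻¹ ≤ (n:ℝ) * Real.log (1-lam)⁻¹ :=
    mul_le_mul_of_nonneg_right h_nm hlog_1lam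
  have p3 : (m:ℝ) * Real.log k ≤ lam * n * Real.log k :=
    mul_le_mul_of_nonneg_right h_m hlogk
  have expand : (n:ℝ) * (lam * Real.log lam⁻¹ + Real.log (1-lam)⁻¹ + lam * Real.log k)
      = lam * n * Real.log lam⁻¹ + n * Real.log (1-lam)⁻¹ + lam * n * Real.log k := by ring
  have key : Real.log (covNum 𝒳 (dMax F) (3*ε)) ≤
      Real.log N + (n:ℝ) * (lam * Real.log lam⁻¹ + Real.log (1-lam)⁻¹ + lam * Real.log k) := by
    rw [expand]; linarith
  have hfinal : Real.log (covNum 𝒳 (dMax F) (3*ε)) / (n:ℝ) ≤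
      (Real.log N + (n:ℝ) * (lam * Real.log lam⁻¹ + Real.log (1-lam)⁻¹ + lam * Real.log k)) / n := by
    gcongr
  rwa [add_div, mul_div_cancel_left₀ _ (ne_of_gt hnpos)] at hfinal

end Part3
section Part4

open Filter Set

noncomputable def errTerm (𝒳 : Type*) [MetricSpace 𝒳] (δ ε : ℝ) : ℝ :=
  ε ^ δ * Real.log ((ε ^ δ)⁻¹) + Real.log ((1 - ε ^ δ)⁻¹) +
    ε ^ δ * Real.log (covNum 𝒳 dist ε)

lemma ev_pos : ∀ᶠ ε in nhdsWithin (0:ℝ) (Set.Ioi 0), 0 < ε := eventually_mem_nhdsWithin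

lemma ev_lt {c : ℝ} (hc : 0 < c) : ∀ᶠ ε in nhdsWithin (0:ℝ) (Set.Ioi 0), ε < c :=
  nhdsWithin_le_nhds (Iio_mem_nhds hc)

lemma tendsto_neg_log :
    Tendsto (fun ε : ℝ => -Real.log ε) (nhdsWithin (0:ℝ) (Set.Ioi 0)) atTop :=
  tendsto_neg_atBot_atTop.comp Real.tendsto_log_nhdsGT_zero

lemma rpow_tendsto {δ : ℝ} (hδ : 0 < δ) :
    Tendsto (fun ε : ℝ => ε ^ δ) (nhdsWithin (0:ℝ) (Set.Ioi 0)) (nhds 0) := by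
  have hc : ContinuousAt (fun x : ℝ => x ^ δ) 0 := Real.continuousAt_rpow_const 0 δ (Or.inr hδ.le)
  have h0 : (0:ℝ) ^ δ = 0 := Real.zero_rpow (ne_of_gt hδ)
  exact (h0 ▸ hc.tendsto).mono_left nhdsWithin_le_nhds

lemma tendsto_self_l :
    Tendsto (fun ε : ℝ => ε) (nhdsWithin (0:ℝ) (Set.Ioi 0)) (nhds 0) :=
  tendsto_id.mono_right nhdsWithin_le_nhds

lemma map_eq_self_of_inv {f g : ℝ → ℝ} {l : Filter ℝ}
    (hf : Tendsto f l l) (hg : Tendsto g l l) (hfg : ∀ᶠ x in l, f (g x) = x) :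
    Filter.map f l = l := by
  apply le_antisymm hf
  have h1 : Filter.map (fun x => f (g x)) l = l := by
    calc Filter.map (fun x => f (g x)) l = Filter.map (fun x => x) l :=
          Filter.map_congr hfg
      _ = l := Filter.map_id'
  calc l = Filter.map (fun x => f (g x)) l := h1.symm
    _ = Filter.map f (Filter.map g l) := (Filter.map_map).symm
    _ ≤ Filter.map f l := Filter.map_mono hg

lemma tendsto_l_self {f : ℝ → ℝ}
    (h0 : Tendsto f (nhdsWithin (0:ℝ) (Set.Ioi 0)) (nhds 0))
    (hpos : ∀ᶠ x in nhdsWithin (0:ℝ) (Set.Ioi 0), 0 < f x) :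
    Tendsto f (nhdsWithin (0:ℝ) (Set.Ioi 0)) (nhdsWithin (0:ℝ) (Set.Ioi 0)) :=
  tendsto_nhdsWithin_iff.2 ⟨h0, hpos⟩

lemma tendsto3_l :
    Tendsto (fun ε : ℝ => 3 * ε) (nhdsWithin (0:ℝ) (Set.Ioi 0)) (nhdsWithin (0:ℝ) (Set.Ioi 0)) := by
  apply tendsto_l_self
  · simpa using tendsto_self_l.const_mul (3:ℝ)
  · filter_upwards [ev_pos] with ε hε
    linarith

lemma map3_eq :
    Filter.map (fun ε : ℝ => 3 * ε) (nhdsWithin (0:ℝ) (Set.Ioi 0)) =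
      nhdsWithin (0:ℝ) (Set.Ioi 0) := by
  apply map_eq_self_of_inv tendsto3_l (g := fun x => x / 3)
  · apply tendsto_l_self
    · simpa using tendsto_self_l.div_const (3:ℝ)
    · filter_upwards [ev_pos] with ε hε
      positivity
  · filter_upwards with x
    ring

lemma tendstoφδ {δ : ℝ} (hδ : 0 < δ) :
    Tendsto (fun ε : ℝ => ε ^ δ * ε) (nhdsWithin (0:ℝ) (Set.Ioi 0))
      (nhdsWithin (0:ℝ) (Set.Ioi 0)) := by
  apply tendsto_l_self
  · simpa using (rpow_tendsto hδ).mul tendsto_self_l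
  · filter_upwards [ev_pos] with ε hε
    exact mul_pos (Real.rpow_pos_of_pos hε δ) hε

lemma mapφδ_eq {δ : ℝ} (hδ : 0 < δ) :
    Filter.map (fun ε : ℝ => ε ^ δ * ε) (nhdsWithin (0:ℝ) (Set.Ioi 0)) =
      nhdsWithin (0:ℝ) (Set.Ioi 0) := by
  have ha : (0:ℝ) < 1 + δ := by linarith
  have hainv : (0:ℝ) < 1 / (1 + δ) := by positivity
  apply map_eq_self_of_inv (tendstoφδ hδ) (g := fun η => η ^ (1/(1+δ)))
  · apply tendsto_l_self (rpow_tendsto hainv)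
    filter_upwards [ev_pos] with η hη
    exact Real.rpow_pos_of_pos hη _
  · filter_upwards [ev_pos] with η hη
    have key : (η ^ (1/(1+δ))) ^ δ * η ^ (1/(1+δ)) = η := by
      have hexp : 1/(1+δ) * δ + 1/(1+δ) = 1 := by field_simp; ring
      rw [← Real.rpow_mul hη.le, ← Real.rpow_add hη, hexp]
      exact Real.rpow_one η
    exact key

lemma errTerm_tendsto (𝒳 : Type*) [MetricSpace 𝒳] (htame : TameGrowth 𝒳) {δ : ℝ}
    (hδ : 0 < δ) :
    Tendsto (fun ε => errTerm 𝒳 δ ε / (-Real.log ε)) (nhdsWithin (0:ℝ) (Set.Ioi 0))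
      (nhds 0) := by
  have t1 : Tendsto (fun ε : ℝ => (ε ^ δ * Real.log ((ε ^ δ)⁻¹)) / (-Real.log ε))
      (nhdsWithin (0:ℝ) (Set.Ioi 0)) (nhds 0) := by
    have base : Tendsto (fun ε : ℝ => δ * ε ^ δ) (nhdsWithin (0:ℝ) (Set.Ioi 0)) (nhds 0) := by
      simpa using (rpow_tendsto hδ).const_mul δ
    apply Filter.Tendsto.congr' _ base
    filter_upwards [ev_pos, ev_lt one_pos] with ε hε hε1
    have hlogneg : Real.log ε < 0 := Real.log_neg hε hε1
    have hX : -Real.log ε ≠ 0 := ne_of_gt (by linarith)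
    rw [Real.log_inv, Real.log_rpow hε, eq_div_iff hX]
    ring
  have t2 : Tendsto (fun ε : ℝ => Real.log ((1 - ε ^ δ)⁻¹) / (-Real.log ε))
      (nhdsWithin (0:ℝ) (Set.Ioi 0)) (nhds 0) := by
    have hinner : ContinuousAt (fun t : ℝ => (1 - t)⁻¹) 0 :=
      (continuousAt_const.sub continuousAt_id).inv₀ (by norm_num)
    have hcont : ContinuousAt (fun t : ℝ => Real.log ((1 - t)⁻¹)) 0 :=
      ContinuousAt.comp (Real.continuousAt_log (by norm_num)) hinner
    have hnum : Tendsto (fun ε : ℝ => Real.log ((1 - ε ^ δ)⁻¹))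
        (nhdsWithin (0:ℝ) (Set.Ioi 0)) (nhds 0) := by
      have := hcont.tendsto.comp (rpow_tendsto hδ)
      simpa [Function.comp_def] using this
    have hprod := hnum.mul (tendsto_neg_log.inv_tendsto_atTop)
    rw [zero_mul] at hprod
    exact hprod.congr fun ε => (div_eq_mul_inv _ _).symm
  have t3 : Tendsto (fun ε : ℝ => (ε ^ δ * Real.log (covNum 𝒳 dist ε)) / (-Real.log ε))
      (nhdsWithin (0:ℝ) (Set.Ioi 0)) (nhds 0) := by
    have hprod := (htame δ hδ).mul (tendsto_neg_log.inv_tendsto_atTop)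
    rw [zero_mul] at hprod
    exact hprod.congr fun ε => (div_eq_mul_inv _ _).symm
  have hsum := (t1.add t2).add t3
  simp only [add_zero] at hsum
  apply hsum.congr
  intro ε
  show _ = errTerm 𝒳 δ ε / (-Real.log ε)
  rw [errTerm, add_div, add_div]

end Part4
section Part5

open Filter Set

variable {G 𝒳 : Type*} [Group G] [DecidableEq G] [MulAction G 𝒳] [MetricSpace 𝒳]

lemma St_le_S_aux [CompactSpace 𝒳]
    (hcont : ∀ g : G, Continuous fun x : 𝒳 => g • x)
    (F : ℕ → Finset G) (hFne : ∀ n, (F n).Nonempty) (S St : ℝ → ℝ)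
    (hS : ∀ ε > (0:ℝ), Tendsto
      (fun n => Real.log (covNum 𝒳 (dMax (F n)) ε) / ((F n).card : ℝ)) atTop (nhds (S ε)))
    (hSt : ∀ ε > (0:ℝ), Tendsto
      (fun n => Real.log (covNum 𝒳 (dBar (F n)) ε) / ((F n).card : ℝ)) atTop (nhds (St ε))) :
    ∀ ε, 0 < ε → St ε ≤ S ε ∧ 0 ≤ St ε ∧ 0 ≤ S ε := by
  intro ε hε
  have h1 : ∀ n, Real.log (covNum 𝒳 (dBar (F n)) ε) / ((F n).card:ℝ) ≤
      Real.log (covNum 𝒳 (dMax (F n)) ε) / ((F n).card:ℝ) := by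
    intro n
    have hcc : covNum 𝒳 (dBar (F n)) ε ≤ covNum 𝒳 (dMax (F n)) ε :=
      covNum_mono_rho (fun x y => dBar_le_dMax (hFne n) x y)
        (fun x => continuous_dMax hcont (hFne n) x) (fun x => dMax_self (hFne n) x)
        (fun x y => dMax_comm (F n) x y) (fun x y z => dMax_triangle (hFne n) x y z) hε
    exact div_le_div_of_nonneg_right (log_nat_mono hcc) (Nat.cast_nonneg _)
  refine ⟨le_of_tendsto_of_tendsto' (hSt ε hε) (hS ε hε) h1, ?_, ?_⟩
  · exact ge_of_tendsto' (hSt ε hε) fun n => div_nonneg (log_nat_nonneg _) (Nat.cast_nonneg _)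
  · exact ge_of_tendsto' (hS ε hε) fun n => div_nonneg (log_nat_nonneg _) (Nat.cast_nonneg _)

lemma main_ineq [CompactSpace 𝒳] [Nonempty 𝒳]
    (hcont : ∀ g : G, Continuous fun x : 𝒳 => g • x)
    (F : ℕ → Finset G) (hFne : ∀ n, (F n).Nonempty) (S St : ℝ → ℝ)
    (hS : ∀ ε > (0:ℝ), Tendsto
      (fun n => Real.log (covNum 𝒳 (dMax (F n)) ε) / ((F n).card : ℝ)) atTop (nhds (S ε)))
    (hSt : ∀ ε > (0:ℝ), Tendsto
      (fun n => Real.log (covNum 𝒳 (dBar (F n)) ε) / ((F n).card : ℝ)) atTop (nhds (St ε)))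
    {δ : ℝ} (hδ : 0 < δ) :
    ∀ᶠ ε in nhdsWithin (0:ℝ) (Set.Ioi 0), S (3*ε) ≤ St (ε^δ * ε) + errTerm 𝒳 δ ε := by
  have hhalf : ∀ᶠ ε in nhdsWithin (0:ℝ) (Set.Ioi 0), ε ^ δ ≤ 1/2 := by
    have h := (rpow_tendsto hδ).eventually (eventually_mem_set.2 (Iio_mem_nhds (by norm_num : (0:ℝ) < 1/2)))
    exact h.mono fun ε hε => le_of_lt hε
  filter_upwards [ev_pos, hhalf] with ε hε hhalfε
  have hlam : 0 < ε ^ δ := Real.rpow_pos_of_pos hε δ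
  have hper : ∀ n, Real.log (covNum 𝒳 (dMax (F n)) (3*ε)) / ((F n).card:ℝ) ≤
      Real.log (covNum 𝒳 (dBar (F n)) (ε^δ * ε)) / ((F n).card:ℝ) +
        (ε^δ * Real.log ((ε^δ)⁻¹) + Real.log ((1-ε^δ)⁻¹) +
          ε^δ * Real.log (covNum 𝒳 dist ε)) :=
    fun n => per_n hcont (F n) (hFne n) hε hlam hhalfε
  have h1 := hS (3*ε) (by linarith)
  have h2 := (hSt (ε^δ * ε) (by positivity)).add_const
      (ε^δ * Real.log ((ε^δ)⁻¹) + Real.log ((1-ε^δ)⁻¹) + ε^δ * Real.log (covNum 𝒳 dist ε))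
  exact le_of_tendsto_of_tendsto' h1 h2 hper

end Part5

/-- Under tame growth of covering numbers, the metric mean dimensions computed from
the max metrics `d_{F_n}` and from the averaged metrics `d̄_{F_n}` coincide, both
for `limsup` and for `liminf` as `ε → 0⁺`.  Here `S ε = lim_n (1/|F_n|) log #(𝒳,d_{F_n},ε)`
and `St ε = lim_n (1/|F_n|) log #(𝒳,d̄_{F_n},ε)`. -/
theorem mdim_max_eq_mdim_bar {G 𝒳 : Type*} [Group G] [Countable G] [DecidableEq G]
    [MulAction G 𝒳] [MetricSpace 𝒳] [CompactSpace 𝒳]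
    (hcont : ∀ g : G, Continuous fun x : 𝒳 => g • x)
    (htame : TameGrowth 𝒳)
    (F : ℕ → Finset G) (hF : IsFolner F)
    (S St : ℝ → ℝ)
    (hS : ∀ ε > (0 : ℝ), Filter.Tendsto
      (fun n => Real.log (covNum 𝒳 (dMax (F n)) ε) / ((F n).card : ℝ))
      Filter.atTop (nhds (S ε)))
    (hSt : ∀ ε > (0 : ℝ), Filter.Tendsto
      (fun n => Real.log (covNum 𝒳 (dBar (F n)) ε) / ((F n).card : ℝ))
      Filter.atTop (nhds (St ε))) :
    Filter.limsup (fun ε => S ε / |Real.log ε|) (nhdsWithin 0 (Set.Ioi 0)) =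
      Filter.limsup (fun ε => St ε / |Real.log ε|) (nhdsWithin 0 (Set.Ioi 0)) ∧
    Filter.liminf (fun ε => S ε / |Real.log ε|) (nhdsWithin 0 (Set.Ioi 0)) =
      Filter.liminf (fun ε => St ε / |Real.log ε|) (nhdsWithin 0 (Set.Ioi 0)) := by
  classical
  have hFne : ∀ n, (F n).Nonempty := hF.1
  rcases em (Nonempty 𝒳) with hX | hX
  · -- main case
    haveI : Nonempty 𝒳 := hX
    set l := nhdsWithin (0:ℝ) (Set.Ioi 0) with hldef
    haveI hNB : l.NeBot := by rw [hldef]; infer_instance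
    have hBase := St_le_S_aux hcont F hFne S St hS hSt
    have hev_pos : ∀ᶠ ε in l, 0 < ε := by rw [hldef]; exact ev_pos
    have hev_lt1 : ∀ᶠ ε in l, ε < 1 := by rw [hldef]; exact ev_lt one_pos
    have habs : ∀ᶠ ε in l, |Real.log ε| = -Real.log ε ∧ 0 < -Real.log ε := by
      filter_upwards [hev_pos, hev_lt1] with ε h1 h2
      have h3 := Real.log_neg h1 h2
      exact ⟨abs_of_neg h3, by linarith⟩
    have habs3 : ∀ᶠ ε in l, |Real.log (3*ε)| = -Real.log ε - Real.log 3 ∧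
        0 < -Real.log ε - Real.log 3 := by
      have h13 : ∀ᶠ ε in l, ε < 1/3 := by rw [hldef]; exact ev_lt (by norm_num)
      filter_upwards [hev_pos, h13] with ε h1 h2
      have h3ε : 0 < 3*ε := by linarith
      have h3ε1 : 3*ε < 1 := by linarith
      have hneg : Real.log (3*ε) < 0 := Real.log_neg h3ε h3ε1
      have hsplit : Real.log (3*ε) = Real.log 3 + Real.log ε :=
        Real.log_mul (by norm_num) (ne_of_gt h1)
      refine ⟨?_, ?_⟩
      · rw [abs_of_neg hneg, hsplit]; ring
      · rw [hsplit] at hneg; linarith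
    have hlogtop : Tendsto (fun ε : ℝ => -Real.log ε) l atTop := by
      rw [hldef]; exact tendsto_neg_log
    set u : ℝ → ℝ := fun ε => S ε / |Real.log ε| with hudef
    set v : ℝ → ℝ := fun ε => St ε / |Real.log ε| with hvdef
    have hv0 : ∀ᶠ ε in l, 0 ≤ v ε := by
      filter_upwards [hev_pos] with ε h1
      exact div_nonneg (hBase ε h1).2.1 (abs_nonneg _)
    have hu0 : ∀ᶠ ε in l, 0 ≤ u ε := by
      filter_upwards [hev_pos] with ε h1
      exact div_nonneg (hBase ε h1).2.2 (abs_nonneg _)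
    have hvu : ∀ᶠ ε in l, v ε ≤ u ε := by
      filter_upwards [hev_pos] with ε h1
      exact div_le_div_of_nonneg_right (hBase ε h1).1 (abs_nonneg _)
    have herrD : ∀ δ : ℝ, 0 < δ → ∀ᶠ ε in l,
        errTerm 𝒳 δ ε ≤ δ * (-Real.log ε - Real.log 3) ∧
        errTerm 𝒳 δ ε ≤ δ * (-Real.log ε) := by
      intro δ hδ
      have htendX : Tendsto (fun ε => errTerm 𝒳 δ ε / (-Real.log ε)) l (nhds 0) := by
        rw [hldef]; exact errTerm_tendsto 𝒳 htame hδ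
      have htendD : Tendsto (fun ε => errTerm 𝒳 δ ε / (-Real.log ε - Real.log 3)) l
          (nhds 0) := by
        have hg : Tendsto (fun ε => 2 * ‖errTerm 𝒳 δ ε / (-Real.log ε)‖) l (nhds 0) := by
          simpa using htendX.norm.const_mul 2
        apply squeeze_zero_norm' ?_ hg
        have hlarge : ∀ᶠ ε in l, 2*Real.log 3 + 1 ≤ -Real.log ε :=
          hlogtop.eventually_ge_atTop _
        filter_upwards [hlarge] with ε h1
        have hlog3 : 0 ≤ Real.log 3 := Real.log_nonneg (by norm_num)
        have hXpos : 0 < -Real.log ε := by linarith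
        have hD : 0 < -Real.log ε - Real.log 3 := by linarith
        have hD2 : (-Real.log ε)/2 ≤ -Real.log ε - Real.log 3 := by linarith
        rw [Real.norm_eq_abs, Real.norm_eq_abs, abs_div, abs_div, abs_of_pos hXpos,
          abs_of_pos hD]
        calc |errTerm 𝒳 δ ε| / (-Real.log ε - Real.log 3)
            ≤ |errTerm 𝒳 δ ε| / ((-Real.log ε)/2) :=
              div_le_div_of_nonneg_left (abs_nonneg _) (by linarith) hD2
          _ = 2 * (|errTerm 𝒳 δ ε| / (-Real.log ε)) := by
              rw [div_div_eq_mul_div]; ring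
      have hIio : ∀ᶠ y in nhds (0:ℝ), y < δ := by
        have := Iio_mem_nhds hδ
        exact this
      have hsmallD : ∀ᶠ ε in l, errTerm 𝒳 δ ε / (-Real.log ε - Real.log 3) < δ :=
        htendD.eventually hIio
      have hsmallX : ∀ᶠ ε in l, errTerm 𝒳 δ ε / (-Real.log ε) < δ :=
        htendX.eventually hIio
      filter_upwards [hsmallD, hsmallX, habs3, habs] with ε h1 h2 h3 h4
      constructor
      · have h5 := (div_lt_iff₀ h3.2).1 h1
        linarith
      · have h5 := (div_lt_iff₀ h4.2).1 h2
        linarith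
    have hm3 : Filter.map (fun ε : ℝ => 3*ε) l = l := by rw [hldef]; exact map3_eq
    have hφ3 : Tendsto (fun ε : ℝ => 3*ε) l l := by rw [hldef]; exact tendsto3_l
    have hKeyA : ∀ δ : ℝ, 0 < δ → δ ≤ 1 → ∀ a : ℝ, (∀ᶠ ε in l, v ε ≤ a) →
        ∀ᶠ ε in l, u ε ≤ (1+δ)^2*a + δ := by
      intro δ hδ hδ1 a ha
      have ha0 : 0 ≤ a := by
        obtain ⟨ε, h1, h2⟩ := (hv0.and ha).exists
        linarith
      have hφδ : Tendsto (fun ε : ℝ => ε^δ * ε) l l := by rw [hldef]; exact tendstoφδ hδ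
      have hmδ : Filter.map (fun ε : ℝ => ε^δ * ε) l = l := by rw [hldef]; exact mapφδ_eq hδ
      have hSt_bd : ∀ᶠ η in l, St η ≤ a * (-Real.log η) := by
        filter_upwards [ha, habs] with η h1 h2
        have h4 : St η / |Real.log η| ≤ a := h1
        rw [h2.1] at h4
        exact (div_le_iff₀ h2.2).1 h4
      have hpull : ∀ᶠ ε in l, St (ε^δ * ε) ≤ a * ((1+δ) * (-Real.log ε)) := by
        filter_upwards [hφδ.eventually hSt_bd, hev_pos] with ε h2 hε
        have hlog : Real.log (ε^δ * ε) = (1+δ) * Real.log ε := by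
          rw [Real.log_mul (ne_of_gt (Real.rpow_pos_of_pos hε δ)) (ne_of_gt hε),
            Real.log_rpow hε]
          ring
        calc St (ε^δ*ε) ≤ a * (-Real.log (ε^δ*ε)) := h2
          _ = a * ((1+δ) * (-Real.log ε)) := by rw [hlog]; ring
      have hS3 : ∀ᶠ ε in l, S (3*ε) ≤ St (ε^δ * ε) + errTerm 𝒳 δ ε := by
        rw [hldef]; exact main_ineq hcont F hFne S St hS hSt hδ
      have hrat : ∀ᶠ ε in l, -Real.log ε ≤ (1+δ) * (-Real.log ε - Real.log 3) := by
        filter_upwards [hlogtop.eventually_ge_atTop ((1+δ) * Real.log 3 / δ)] with ε h1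
        rw [div_le_iff₀ hδ] at h1
        have hexp : (1+δ)*(-Real.log ε - Real.log 3)
            = -Real.log ε + ((-Real.log ε)*δ - (1+δ)*Real.log 3) := by ring
        rw [hexp]
        linarith
      have herr := herrD δ hδ
      have hev3 : ∀ᶠ ε in l, u (3*ε) ≤ (1+δ)^2*a + δ := by
        filter_upwards [hS3, hpull, habs3, hrat, herr] with ε h1 h2 h3 h4 h5
        have hD := h3.2
        have hmain : S (3*ε) ≤ ((1+δ)^2*a + δ) * (-Real.log ε - Real.log 3) := by
          have step1 : S (3*ε) ≤ a*((1+δ)*(-Real.log ε)) + δ*(-Real.log ε - Real.log 3) := by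
            have h6 := h5.1
            linarith
          have step2 : a*((1+δ)*(-Real.log ε)) ≤
              a*(1+δ)*((1+δ)*(-Real.log ε - Real.log 3)) := by
            have hnn : 0 ≤ a*(1+δ) := mul_nonneg ha0 (by linarith)
            calc a*((1+δ)*(-Real.log ε)) = (a*(1+δ))*(-Real.log ε) := by ring
              _ ≤ (a*(1+δ))*((1+δ)*(-Real.log ε - Real.log 3)) :=
                  mul_le_mul_of_nonneg_left h4 hnn
              _ = a*(1+δ)*((1+δ)*(-Real.log ε - Real.log 3)) := by ring
          have hstep : S (3*ε) ≤
              a*(1+δ)*((1+δ)*(-Real.log ε - Real.log 3)) + δ*(-Real.log ε - Real.log 3) := by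
            linarith
          calc S (3*ε) ≤ a*(1+δ)*((1+δ)*(-Real.log ε - Real.log 3))
                + δ*(-Real.log ε - Real.log 3) := hstep
            _ = ((1+δ)^2*a + δ) * (-Real.log ε - Real.log 3) := by ring
        have hu3 : u (3*ε) = S (3*ε) / (-Real.log ε - Real.log 3) := by
          show S (3*ε) / |Real.log (3*ε)| = _
          rw [h3.1]
        rw [hu3]
        exact (div_le_iff₀ hD).2 hmain
      have hfin : ∀ᶠ η in Filter.map (fun ε : ℝ => 3*ε) l, u η ≤ (1+δ)^2*a + δ := by
        rw [eventually_map]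
        exact hev3
      rwa [hm3] at hfin
    have hKeyB : ∀ δ : ℝ, 0 < δ → δ ≤ 1 → ∀ b : ℝ, (∀ᶠ ε in l, b ≤ u ε) → 0 ≤ b →
        ∀ᶠ ε in l, (b*(1-δ) - δ)/(1+δ) ≤ v ε := by
      intro δ hδ hδ1 b hb hb0
      have hφδ : Tendsto (fun ε : ℝ => ε^δ * ε) l l := by rw [hldef]; exact tendstoφδ hδ
      have hmδ : Filter.map (fun ε : ℝ => ε^δ * ε) l = l := by rw [hldef]; exact mapφδ_eq hδ
      have hS3 : ∀ᶠ ε in l, S (3*ε) ≤ St (ε^δ * ε) + errTerm 𝒳 δ ε := by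
        rw [hldef]; exact main_ineq hcont F hFne S St hS hSt hδ
      have hb3 : ∀ᶠ ε in l, b ≤ u (3*ε) := hφ3.eventually hb
      have herr := herrD δ hδ
      have hlog3small : ∀ᶠ ε in l, Real.log 3 ≤ δ * (-Real.log ε) := by
        filter_upwards [hlogtop.eventually_ge_atTop (Real.log 3 / δ)] with ε h1
        rw [div_le_iff₀ hδ] at h1
        linarith
      have hev2 : ∀ᶠ ε in l, (b*(1-δ) - δ)/(1+δ) ≤ v (ε^δ * ε) := by
        filter_upwards [hS3, hb3, habs3, habs, herr, hlog3small, hev_pos]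
          with ε h1 h2 h3 hXp h5 h6 hε
        have hD := h3.2
        have hX := hXp.2
        have hu3 : u (3*ε) = S (3*ε) / (-Real.log ε - Real.log 3) := by
          show S (3*ε) / |Real.log (3*ε)| = _
          rw [h3.1]
        rw [hu3] at h2
        have hbD : b * (-Real.log ε - Real.log 3) ≤ S (3*ε) := (le_div_iff₀ hD).1 h2
        have hSt_lb : b*(-Real.log ε - Real.log 3) - errTerm 𝒳 δ ε ≤ St (ε^δ*ε) := by
          linarith
        have hnum : (b*(1-δ) - δ) * (-Real.log ε) ≤ St (ε^δ*ε) := by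
          have einner : (1-δ)*(-Real.log ε) ≤ -Real.log ε - Real.log 3 := by
            nlinarith [h6]
          have e1 : b*((1-δ)*(-Real.log ε)) ≤ b*(-Real.log ε - Real.log 3) :=
            mul_le_mul_of_nonneg_left einner hb0
          have e2 : errTerm 𝒳 δ ε ≤ δ*(-Real.log ε) := h5.2
          calc (b*(1-δ) - δ)*(-Real.log ε)
              = b*((1-δ)*(-Real.log ε)) - δ*(-Real.log ε) := by ring
            _ ≤ b*(-Real.log ε - Real.log 3) - errTerm 𝒳 δ ε := by linarith
            _ ≤ St (ε^δ*ε) := hSt_lb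
        have hlogφ : |Real.log (ε^δ * ε)| = (1+δ)*(-Real.log ε) := by
          have hlog : Real.log (ε^δ * ε) = (1+δ) * Real.log ε := by
            rw [Real.log_mul (ne_of_gt (Real.rpow_pos_of_pos hε δ)) (ne_of_gt hε),
              Real.log_rpow hε]
            ring
          have hlogneg : (1+δ) * Real.log ε < 0 :=
            mul_neg_of_pos_of_neg (by linarith) (by linarith)
          rw [hlog, abs_of_neg hlogneg]
          ring
        have hden : 0 < (1+δ)*(-Real.log ε) := mul_pos (by linarith) hX
        have hvφ : v (ε^δ*ε) = St (ε^δ*ε) / ((1+δ)*(-Real.log ε)) := by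
          show St (ε^δ*ε) / |Real.log (ε^δ*ε)| = _
          rw [hlogφ]
        rw [hvφ]
        rw [le_div_iff₀ hden]
        calc (b*(1-δ) - δ)/(1+δ) * ((1+δ)*(-Real.log ε))
            = (b*(1-δ) - δ)*(-Real.log ε) := by field_simp
          _ ≤ St (ε^δ*ε) := hnum
      have hfin : ∀ᶠ η in Filter.map (fun ε : ℝ => ε^δ * ε) l, (b*(1-δ) - δ)/(1+δ) ≤ v η := by
        rw [eventually_map]
        exact hev2
      rwa [hmδ] at hfin
    constructor
    · rw [Filter.limsup_eq, Filter.limsup_eq]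
      set Au := {a : ℝ | ∀ᶠ ε in l, u ε ≤ a} with hAudef
      set Av := {a : ℝ | ∀ᶠ ε in l, v ε ≤ a} with hAvdef
      have hAsub : Au ⊆ Av := by
        intro a ha
        filter_upwards [ha, hvu] with ε h1 h2
        linarith
      have hApos : ∀ a ∈ Av, 0 ≤ a := by
        intro a ha
        obtain ⟨ε, h1, h2⟩ := (hv0.and ha).exists
        linarith
      by_cases hAv : Av.Nonempty
      · have hAu : Au.Nonempty :=
          ⟨(1+1)^2 * hAv.choose + 1, hKeyA 1 one_pos le_rfl _ hAv.choose_spec⟩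
        have hbddAv : BddBelow Av := ⟨0, fun a ha => hApos a ha⟩
        have h1 : sInf Av ≤ sInf Au := csInf_le_csInf hbddAv hAu hAsub
        have h2 : sInf Au ≤ sInf Av := by
          apply le_csInf hAv
          intro a ha
          have ha0 := hApos a ha
          apply le_of_forall_pos_le_add
          intro η hη
          have h3a : (0:ℝ) < 3*a+1 := by linarith
          set δ := min 1 (η / (3*a+1)) with hδdef
          have hδpos : 0 < δ := lt_min one_pos (div_pos hη h3a)
          have hδ1 : δ ≤ 1 := min_le_left _ _
          have hmem : ((1+δ)^2*a + δ) ∈ Au := hKeyA δ hδpos hδ1 a ha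
          have hle : sInf Au ≤ (1+δ)^2*a + δ := csInf_le (hbddAv.mono hAsub) hmem
          have hδη : δ * (3*a+1) ≤ η := by
            have h5 : δ ≤ η/(3*a+1) := min_le_right _ _
            calc δ*(3*a+1) ≤ (η/(3*a+1))*(3*a+1) := mul_le_mul_of_nonneg_right h5 h3a.le
              _ = η := div_mul_cancel₀ η (ne_of_gt h3a)
          have hsq : δ*δ ≤ δ := by nlinarith
          have hexp : (1+δ)^2*a + δ ≤ a + η := by
            nlinarith [mul_le_mul_of_nonneg_right hsq ha0]
          linarith
        exact le_antisymm h2 h1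
      · have hAu : ¬ Au.Nonempty := fun h => hAv (h.imp fun a ha => hAsub ha)
        rw [Set.not_nonempty_iff_eq_empty] at hAu hAv
        rw [hAu, hAv]
    · rw [Filter.liminf_eq, Filter.liminf_eq]
      set Bu := {a : ℝ | ∀ᶠ ε in l, a ≤ u ε} with hBudef
      set Bv := {a : ℝ | ∀ᶠ ε in l, a ≤ v ε} with hBvdef
      have hBsub : Bv ⊆ Bu := by
        intro b hb
        filter_upwards [hb, hvu] with ε h1 h2
        linarith
      have h0Bv : (0:ℝ) ∈ Bv := hv0
      by_cases hBu : BddAbove Bu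
      · have hBvBdd : BddAbove Bv := hBu.mono hBsub
        have h1 : sSup Bv ≤ sSup Bu := csSup_le_csSup hBu ⟨0, h0Bv⟩ hBsub
        have h2 : sSup Bu ≤ sSup Bv := by
          apply csSup_le ⟨0, hBsub h0Bv⟩
          intro b hb
          rcases le_or_gt b 0 with hb0 | hb0
          · exact hb0.trans (le_csSup hBvBdd h0Bv)
          · apply le_of_forall_pos_le_add
            intro η hη
            have h2b : (0:ℝ) < 2*b+1 := by linarith
            set δ := min 1 (η/(2*b+1)) with hδdef
            have hδpos : 0 < δ := lt_min one_pos (div_pos hη h2b)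
            have hδ1 : δ ≤ 1 := min_le_left _ _
            have hmem : ((b*(1-δ) - δ)/(1+δ)) ∈ Bv := hKeyB δ hδpos hδ1 b hb hb0.le
            have hle : (b*(1-δ) - δ)/(1+δ) ≤ sSup Bv := le_csSup hBvBdd hmem
            have hδη : δ*(2*b+1) ≤ η := by
              have h5 : δ ≤ η/(2*b+1) := min_le_right _ _
              calc δ*(2*b+1) ≤ (η/(2*b+1))*(2*b+1) := mul_le_mul_of_nonneg_right h5 h2b.le
                _ = η := div_mul_cancel₀ η (ne_of_gt h2b)
            have h1δ : (0:ℝ) < 1+δ := by linarith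
            have hkey2 : b - η ≤ (b*(1-δ) - δ)/(1+δ) := by
              rw [le_div_iff₀ h1δ]
              nlinarith [hδη, mul_pos hη hδpos]
            linarith
        exact le_antisymm h2 h1
      · have hBv : ¬ BddAbove Bv := by
          intro hBvB
          apply hBu
          obtain ⟨M, hM⟩ := hBvB
          refine ⟨3*(max M 0) + 1, fun b hb => ?_⟩
          rcases le_or_gt b 0 with hb0 | hb0
          · have hmax : (0:ℝ) ≤ max M 0 := le_max_right _ _
            linarith
          · have hmem : ((b*(1-(1/2:ℝ)) - (1/2))/(1+(1/2))) ∈ Bv :=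
              hKeyB (1/2) (by norm_num) (by norm_num) b hb hb0.le
            have h3 := hM hmem
            have h4 : b*(1-(1/2:ℝ)) - (1/2) ≤ (1+(1/2))*M := by
              rw [div_le_iff₀ (by norm_num : (0:ℝ) < 1+(1/2))] at h3
              linarith
            have h5 : M ≤ max M 0 := le_max_left _ _
            linarith
        rw [Real.sSup_of_not_bddAbove hBu, Real.sSup_of_not_bddAbove hBv]
  · -- empty case
    haveI : IsEmpty 𝒳 := not_nonempty_iff.1 hX
    have hcov : ∀ (ρ : 𝒳 → 𝒳 → ℝ) (ε : ℝ), covNum 𝒳 ρ ε = 0 := by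
      intro ρ ε
      have h0 : covNum 𝒳 ρ ε ≤ (∅ : Finset (Set 𝒳)).card := by
        apply covNum_le_card
        · intro V hV
          exact absurd hV (Finset.notMem_empty V)
        · have huniv : (Set.univ : Set 𝒳) = ∅ := Set.univ_eq_empty_iff.2 ‹_›
          simp [huniv]
        · intro V hV
          exact absurd hV (Finset.notMem_empty V)
      simpa using h0
    have hfeq : ∀ ε, 0 < ε → S ε = St ε := by
      intro ε hε
      have h1 : S ε = 0 := by
        apply tendsto_nhds_unique (hS ε hε)
        simp only [hcov, Nat.cast_zero, Real.log_zero, zero_div]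
        exact tendsto_const_nhds
      have h2 : St ε = 0 := by
        apply tendsto_nhds_unique (hSt ε hε)
        simp only [hcov, Nat.cast_zero, Real.log_zero, zero_div]
        exact tendsto_const_nhds
      rw [h1, h2]
    have hev : (fun ε => S ε / |Real.log ε|) =ᶠ[nhdsWithin (0:ℝ) (Set.Ioi 0)]
        (fun ε => St ε / |Real.log ε|) := by
      filter_upwards [ev_pos] with ε hε
      rw [hfeq ε hε]
    exact ⟨limsup_congr hev, liminf_congr hev⟩
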